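/- The map (m,n) ↦ z_{m,n} from ℤ² to the cover of a phyllotactic tiling is injective: if z_{m,n} = z_{m',n'} then m = m' and n = n'. -/
import Mathlib


/-- Cyclic partial sum: `csum d m = d 1 + ⋯ + d m` for `m > 0`, `0` for `m = 0`,
and `-(d (m+1) + ⋯ + d 0)` for `m < 0`. -/
noncomputable def csum (d : ℤ → ℝ × ℝ) (m : ℤ) : ℝ × ℝ :=
  (∑ j ∈ Finset.Icc 1 m, d j) - (∑ j ∈ Finset.Icc (m + 1) 0, d j)

/-- Points of the cover of a phyllotactic tiling. -/
noncomputable def zpt (a b : ℝ) (d u : ℤ → ℝ × ℝ) (m n : ℤ) : ℝ × ℝ :=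
  ((a, b) : ℝ × ℝ) + csum d m + csum u n

/-- Projection from the plane to the cylinder `(ℝ/ℤ) × ℝ`. -/
noncomputable def pii (p : ℝ × ℝ) : AddCircle (1 : ℝ) × ℝ := ((p.1 : AddCircle (1 : ℝ)), p.2)

lemma csum_succ (f : ℤ → ℝ × ℝ) (m : ℤ) : csum f (m + 1) = csum f m + f (m + 1) := by
  unfold csum
  rcases le_or_gt 0 m with h | h
  · have h1 : Finset.Icc (1 : ℤ) (m + 1) = insert (m + 1) (Finset.Icc 1 m) := by
      ext x; simp only [Finset.mem_Icc, Finset.mem_insert]; omega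
    have h2 : (m + 1 : ℤ) ∉ Finset.Icc (1 : ℤ) m := by simp only [Finset.mem_Icc]; omega
    have h3 : Finset.Icc (m + 1 + 1 : ℤ) 0 = ∅ := by
      apply Finset.Icc_eq_empty; omega
    have h4 : Finset.Icc (m + 1 : ℤ) 0 = ∅ := by
      apply Finset.Icc_eq_empty; omega
    rw [h1, Finset.sum_insert h2, h3, h4]
    simp
    try abel
  · have h1 : Finset.Icc (1 : ℤ) (m + 1) = ∅ := by
      apply Finset.Icc_eq_empty; omega
    have h2 : Finset.Icc (1 : ℤ) m = ∅ := by
      apply Finset.Icc_eq_empty; omega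
    have h3 : Finset.Icc (m + 1 : ℤ) 0 = insert (m + 1) (Finset.Icc (m + 1 + 1) 0) := by
      ext x; simp only [Finset.mem_Icc, Finset.mem_insert]; omega
    have h4 : (m + 1 : ℤ) ∉ Finset.Icc (m + 1 + 1 : ℤ) 0 := by simp
    rw [h1, h2, h3, Finset.sum_insert h4]
    simp
    try abel

lemma csum_diff (f : ℤ → ℝ × ℝ) {m' : ℤ} : ∀ {m : ℤ}, m' ≤ m →
    csum f m - csum f m' = ∑ j ∈ Finset.Icc (m' + 1) m, f j := by
  have H : ∀ m : ℤ, m' ≤ m →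
      csum f m - csum f m' = ∑ j ∈ Finset.Icc (m' + 1) m, f j := by
    refine Int.le_induction ?_ ?_
    · simp [Finset.Icc_eq_empty_of_lt (by omega : m' < m' + 1)]
    · intro k hk ih
      have h1 : Finset.Icc (m' + 1) (k + 1) = insert (k + 1) (Finset.Icc (m' + 1) k) := by
        ext x; simp only [Finset.mem_Icc, Finset.mem_insert]; omega
      have h2 : (k + 1 : ℤ) ∉ Finset.Icc (m' + 1) k := by simp
      rw [csum_succ, h1, Finset.sum_insert h2, ← ih]; abel
  exact fun {m} h => H m h

theorem tiling_cover_injective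
    (M N : ℕ) (hM : 0 < M) (hN : 0 < N) (a b : ℝ) (d u : ℤ → ℝ × ℝ)
    (hdper : ∀ j : ℤ, d (j + M) = d j) (huper : ∀ i : ℤ, u (i + N) = u i)
    (hd : ∀ j : ℤ, 0 ≤ (d j).1 ∧ (d j).2 < 0)
    (hu : ∀ i : ℤ, 0 < (u i).1 ∧ 0 ≤ (u i).2)
    (hsum : (∑ j ∈ Finset.Icc (1 : ℤ) (M : ℤ), d j)
        + (∑ i ∈ Finset.Icc (1 : ℤ) (N : ℤ), u i) = ((1 : ℝ), (0 : ℝ))) :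
    ∀ m n m' n' : ℤ, zpt a b d u m n = zpt a b d u m' n' → m = m' ∧ n = n' := by
  -- key auxiliary: the main cancellation is impossible unless indices agree
  have key : ∀ m n m' n' : ℤ, m' ≤ m → n' ≤ n →
      csum d m + csum u n = csum d m' + csum u n' → m = m' ∧ n = n' := by
    intro m n m' n' hm hn heq
    have hdm : csum d m - csum d m' = ∑ j ∈ Finset.Icc (m' + 1) m, d j := csum_diff d hm
    have hum : csum u n - csum u n' = ∑ j ∈ Finset.Icc (n' + 1) n, u j := csum_diff u hn
    have hzero : (∑ j ∈ Finset.Icc (m' + 1) m, d j) + (∑ j ∈ Finset.Icc (n' + 1) n, u j) = 0 := by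
      rw [← hdm, ← hum]; rw [show csum d m = csum d m' + csum u n' - csum u n by
        have := heq; linear_combination heq]
      abel
    -- second coordinates
    have h2 : (∑ j ∈ Finset.Icc (m' + 1) m, (d j).2) + (∑ j ∈ Finset.Icc (n' + 1) n, (u j).2)
        = 0 := by
      have := congrArg Prod.snd hzero
      simpa [Prod.snd_sum] using this
    have h1 : (∑ j ∈ Finset.Icc (m' + 1) m, (d j).1) + (∑ j ∈ Finset.Icc (n' + 1) n, (u j).1)
        = 0 := by
      have := congrArg Prod.fst hzero
      simpa [Prod.fst_sum] using this
    -- n = n' from first coordinates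
    have hneq : n = n' := by
      by_contra hne
      have hlt : n' < n := lt_of_le_of_ne hn (Ne.symm hne)
      have hne' : (Finset.Icc (n' + 1) n).Nonempty := ⟨n, by simp only [Finset.mem_Icc]; omega⟩
      have hupos : 0 < ∑ j ∈ Finset.Icc (n' + 1) n, (u j).1 :=
        Finset.sum_pos (fun j _ => (hu j).1) hne'
      have hdnn : 0 ≤ ∑ j ∈ Finset.Icc (m' + 1) m, (d j).1 :=
        Finset.sum_nonneg fun j _ => (hd j).1
      linarith
    have hu0 : (∑ j ∈ Finset.Icc (n' + 1) n, (u j).2) = 0 := by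
      rw [hneq, Finset.Icc_eq_empty (by omega)]; simp
    -- m = m' from second coordinates
    have hmeq : m = m' := by
      by_contra hne
      have hlt : m' < m := lt_of_le_of_ne hm (Ne.symm hne)
      have hne' : (Finset.Icc (m' + 1) m).Nonempty := ⟨m, by simp only [Finset.mem_Icc]; omega⟩
      have hdneg : (∑ j ∈ Finset.Icc (m' + 1) m, (d j).2) < 0 :=
        Finset.sum_neg (fun j _ => (hd j).2) hne'
      linarith
    exact ⟨hmeq, hneq⟩
  intro m n m' n' h
  have heq : csum d m + csum u n = csum d m' + csum u n' := by
    have : ((a, b) : ℝ × ℝ) + csum d m + csum u n = ((a, b) : ℝ × ℝ) + csum d m' + csum u n' := h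
    linear_combination this
  rcases le_total m' m with hm | hm <;> rcases le_total n' n with hn | hn
  · exact key m n m' n' hm hn heq
  · -- m' ≤ m, n ≤ n' : use components directly
    have hdm : csum d m - csum d m' = ∑ j ∈ Finset.Icc (m' + 1) m, d j := csum_diff d hm
    have hum : csum u n' - csum u n = ∑ j ∈ Finset.Icc (n + 1) n', u j := csum_diff u hn
    have hzero : (∑ j ∈ Finset.Icc (m' + 1) m, d j) = ∑ j ∈ Finset.Icc (n + 1) n', u j := by
      rw [← hdm, ← hum]; linear_combination heq
    have hmeq : m = m' := by
      by_contra hne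
      have hlt : m' < m := lt_of_le_of_ne hm (Ne.symm hne)
      have hne' : (Finset.Icc (m' + 1) m).Nonempty := ⟨m, by simp only [Finset.mem_Icc]; omega⟩
      have hdneg : (∑ j ∈ Finset.Icc (m' + 1) m, (d j).2) < 0 :=
        Finset.sum_neg (fun j _ => (hd j).2) hne'
      have hunn : 0 ≤ ∑ j ∈ Finset.Icc (n + 1) n', (u j).2 :=
        Finset.sum_nonneg fun j _ => (hu j).2
      have := congrArg Prod.snd hzero
      simp only [Prod.snd_sum] at this
      linarith
    have hneq : n = n' := by
      by_contra hne
      have hlt : n < n' := lt_of_le_of_ne hn hne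
      have hne' : (Finset.Icc (n + 1) n').Nonempty := ⟨n', by simp only [Finset.mem_Icc]; omega⟩
      have hupos : 0 < ∑ j ∈ Finset.Icc (n + 1) n', (u j).1 :=
        Finset.sum_pos (fun j _ => (hu j).1) hne'
      have hd0 : (∑ j ∈ Finset.Icc (m' + 1) m, (d j).1) = 0 := by
        rw [hmeq, Finset.Icc_eq_empty (by omega)]; simp
      have := congrArg Prod.fst hzero
      simp only [Prod.fst_sum] at this
      linarith
    exact ⟨hmeq, hneq⟩
  · -- m ≤ m', n' ≤ n : symmetric to previous
    have hdm : csum d m' - csum d m = ∑ j ∈ Finset.Icc (m + 1) m', d j := csum_diff d hm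
    have hum : csum u n - csum u n' = ∑ j ∈ Finset.Icc (n' + 1) n, u j := csum_diff u hn
    have hzero : (∑ j ∈ Finset.Icc (m + 1) m', d j) = ∑ j ∈ Finset.Icc (n' + 1) n, u j := by
      rw [← hdm, ← hum]; linear_combination -heq
    have hmeq : m' = m := by
      by_contra hne
      have hlt : m < m' := lt_of_le_of_ne hm (Ne.symm hne)
      have hne' : (Finset.Icc (m + 1) m').Nonempty := ⟨m', by simp only [Finset.mem_Icc]; omega⟩
      have hdneg : (∑ j ∈ Finset.Icc (m + 1) m', (d j).2) < 0 :=
        Finset.sum_neg (fun j _ => (hd j).2) hne'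
      have hunn : 0 ≤ ∑ j ∈ Finset.Icc (n' + 1) n, (u j).2 :=
        Finset.sum_nonneg fun j _ => (hu j).2
      have := congrArg Prod.snd hzero
      simp only [Prod.snd_sum] at this
      linarith
    have hneq : n' = n := by
      by_contra hne
      have hlt : n' < n := lt_of_le_of_ne hn hne
      have hne' : (Finset.Icc (n' + 1) n).Nonempty := ⟨n, by simp only [Finset.mem_Icc]; omega⟩
      have hupos : 0 < ∑ j ∈ Finset.Icc (n' + 1) n, (u j).1 :=
        Finset.sum_pos (fun j _ => (hu j).1) hne'
      have hd0 : (∑ j ∈ Finset.Icc (m + 1) m', (d j).1) = 0 := by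
        rw [hmeq, Finset.Icc_eq_empty (by omega)]; simp
      have := congrArg Prod.fst hzero
      simp only [Prod.fst_sum] at this
      linarith
    exact ⟨hmeq.symm, hneq.symm⟩
  · have := key m' n' m n hm hn heq.symm
    exact ⟨this.1.symm, this.2.symm⟩
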